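/- arXiv:2309.09931 — 2 statements merged into one kernel-verified Lean document; each statement's English description precedes it below -/
import Mathlib

section
/- In the rewrite system R (rules: x+e→x, e+x→x, (x+y)+z→x+(y+z), (x+y)·z→y·(x·z), (d·x)·y→x·(y+x), e·x→x, d·e→e), every ground term t has a unique normal form nf(t), and for ground terms t, u we have t ≡ u in the equational theory iff nf(t) = nf(u). -/
/-- Ground terms over constants d, e with binary operations + (add) and · (app). -/
inductive Tm : Type
  | d : Tm
  | e : Tm
  | add : Tm → Tm → Tm
  | app : Tm → Tm → Tm
  deriving DecidableEq

open Tm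

/-- Root rewrite steps: instances of the oriented rules. -/
inductive Root : Tm → Tm → Prop
  | addE (x) : Root (add x e) x
  | eAdd (x) : Root (add e x) x
  | assoc (x y z) : Root (add (add x y) z) (add x (add y z))
  | appAdd (x y z) : Root (app (add x y) z) (app y (app x z))
  | appD (x y) : Root (app (app d x) y) (app x (add y x))
  | appE (x) : Root (app e x) x
  | dE : Root (app d e) e

/-- One rewrite step: a root step applied at some subterm position. -/
inductive Step : Tm → Tm → Prop
  | root {t u} : Root t u → Step t u
  | addL {t t' u} : Step t t' → Step (add t u) (add t' u)
  | addR {t u u'} : Step u u' → Step (add t u) (add t u')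
  | appL {t t' u} : Step t t' → Step (app t u) (app t' u)
  | appR {t u u'} : Step u u' → Step (app t u) (app t u')

/-- Zero or more rewrite steps. -/
def Steps : Tm → Tm → Prop := Relation.ReflTransGen Step

/-- A normal form is a term to which no rule applies. -/
def NormalForm (t : Tm) : Prop := ∀ u, ¬ Step t u

/-- Provable equality in the equational theory (reflexive symmetric transitive
congruence closure of the rule instances). -/
def TermEq : Tm → Tm → Prop := Relation.EqvGen Step

/-! ### Normalization function -/

def nadd : Tm → Tm → Tm
  | .e, y => y
  | .d, y => if y = .e then .d else .add .d y
  | .app a b, y => if y = .e then .app a b else .add (.app a b) y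
  | .add a b, z => if z = .e then .add a b else nadd a (nadd b z)

def napp : Tm → Tm → Tm
  | .e, y => y
  | .d, y => if y = .e then .e else .app .d y
  | .add a b, y => napp b (napp a y)
  | .app a b, y => if a = .d then napp b (nadd y b) else .app (.app a b) y

def nf : Tm → Tm
  | .d => .d
  | .e => .e
  | .add a b => nadd (nf a) (nf b)
  | .app a b => napp (nf a) (nf b)

lemma nadd_e_right (t : Tm) : nadd t e = t := by cases t <;> simp [nadd]

lemma nadd_ne_e (y : Tm) : ∀ z, z ≠ e → nadd y z ≠ e := by
  induction y with
  | e => intro z hz; simpa [nadd] using hz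
  | d => intro z hz; simp [nadd, hz]
  | app a b _ _ => intro z hz; simp [nadd, hz]
  | add a b iha ihb => intro z hz; simp only [nadd, if_neg hz]
                       exact iha _ (ihb z hz)

lemma nadd_assoc (x : Tm) : ∀ y z, nadd (nadd x y) z = nadd x (nadd y z) := by
  induction x with
  | e => intro y z; simp [nadd]
  | d =>
    intro y z
    by_cases hy : y = e
    · subst hy; simp [nadd]; by_cases hz : z = e <;> simp [hz]
    · by_cases hz : z = e
      · subst hz; simp [nadd, hy, nadd_e_right]
      · simp [nadd, hy, hz]
  | app a b _ _ =>
    intro y z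
    by_cases hy : y = e
    · subst hy; simp [nadd]; by_cases hz : z = e <;> simp [hz]
    · by_cases hz : z = e
      · subst hz; simp [nadd, hy, nadd_e_right]
      · simp [nadd, hy, hz]
  | add a b iha ihb =>
    intro y z
    by_cases hz : z = e
    · subst hz; rw [nadd_e_right, nadd_e_right]
    · by_cases hy : y = e
      · subst hy; simp [nadd, hz]
      · have hyz : nadd y z ≠ e := nadd_ne_e y z hz
        rw [show nadd (add a b) y = nadd a (nadd b y) from by simp [nadd, hy],
            iha, ihb,
            show nadd (add a b) (nadd y z) = nadd a (nadd b (nadd y z)) from by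
              simp [nadd, hyz]]

lemma napp_nadd (x : Tm) : ∀ y z, napp (nadd x y) z = napp y (napp x z) := by
  induction x with
  | e => intro y z; simp [nadd, napp]
  | d =>
    intro y z
    by_cases hy : y = e
    · subst hy; simp [nadd, napp]
    · simp [nadd, hy, napp]
  | app a b _ _ =>
    intro y z
    by_cases hy : y = e
    · subst hy; simp [nadd, napp]
    · simp [nadd, hy, napp]
  | add a b iha ihb =>
    intro y z
    by_cases hy : y = e
    · subst hy; simp [nadd, napp]
    · rw [show nadd (add a b) y = nadd a (nadd b y) from by simp [nadd, hy],
          iha, ihb]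
      simp [napp]

lemma napp_d (x y : Tm) : napp (napp d x) y = napp x (nadd y x) := by
  by_cases hx : x = e
  · subst hx; simp [napp, nadd_e_right]
  · simp [napp, hx]

/-! ### nf is invariant under steps -/

lemma nf_root {t u : Tm} (r : Root t u) : nf t = nf u := by
  cases r with
  | addE x => simp [nf, nadd_e_right]
  | eAdd x => simp [nf, nadd]
  | assoc x y z => simp [nf, nadd_assoc]
  | appAdd x y z => simp [nf, napp_nadd]
  | appD x y => simp [nf, napp_d]
  | appE x => simp [nf, napp]
  | dE => simp [nf, napp]

lemma nf_step {t u : Tm} (h : Step t u) : nf t = nf u := by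
  induction h with
  | root r => exact nf_root r
  | addL _ ih => simp [nf, ih]
  | addR _ ih => simp [nf, ih]
  | appL _ ih => simp [nf, ih]
  | appR _ ih => simp [nf, ih]

lemma nf_steps {t u : Tm} (h : Steps t u) : nf t = nf u := by
  induction h with
  | refl => rfl
  | tail _ h ih => exact ih.trans (nf_step h)

/-! ### reaching the normal form -/

lemma steps_addL {t t' u : Tm} (h : Steps t t') : Steps (add t u) (add t' u) :=
  Relation.ReflTransGen.lift (fun x => add x u) (fun _ _ h => Step.addL h) _ _ h

lemma steps_addR {t u u' : Tm} (h : Steps u u') : Steps (add t u) (add t u') :=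
  Relation.ReflTransGen.lift (fun x => add t x) (fun _ _ h => Step.addR h) _ _ h

lemma steps_appL {t t' u : Tm} (h : Steps t t') : Steps (app t u) (app t' u) :=
  Relation.ReflTransGen.lift (fun x => app x u) (fun _ _ h => Step.appL h) _ _ h

lemma steps_appR {t u u' : Tm} (h : Steps u u') : Steps (app t u) (app t u') :=
  Relation.ReflTransGen.lift (fun x => app t x) (fun _ _ h => Step.appR h) _ _ h

lemma steps_nadd (x : Tm) : ∀ y, Steps (add x y) (nadd x y) := by
  induction x with
  | e => intro y; exact Relation.ReflTransGen.single (Step.root (Root.eAdd y))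
  | d =>
    intro y
    by_cases hy : y = e
    · subst hy
      rw [show nadd d e = d from by simp [nadd]]
      exact Relation.ReflTransGen.single (Step.root (Root.addE d))
    · rw [show nadd d y = add d y from by simp [nadd, hy]]
      exact Relation.ReflTransGen.refl
  | app a b _ _ =>
    intro y
    by_cases hy : y = e
    · subst hy
      rw [show nadd (app a b) e = app a b from by simp [nadd]]
      exact Relation.ReflTransGen.single (Step.root (Root.addE _))
    · rw [show nadd (app a b) y = add (app a b) y from by simp [nadd, hy]]
      exact Relation.ReflTransGen.refl
  | add a b iha ihb =>
    intro y
    by_cases hy : y = e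
    · subst hy
      rw [show nadd (add a b) e = add a b from by simp [nadd]]
      exact Relation.ReflTransGen.single (Step.root (Root.addE _))
    · rw [show nadd (add a b) y = nadd a (nadd b y) from by simp [nadd, hy]]
      exact Relation.ReflTransGen.trans
        (Relation.ReflTransGen.single (Step.root (Root.assoc a b y)))
        (Relation.ReflTransGen.trans (steps_addR (ihb y)) (iha (nadd b y)))

lemma steps_napp (x : Tm) : ∀ y, Steps (app x y) (napp x y) := by
  induction x with
  | e => intro y; exact Relation.ReflTransGen.single (Step.root (Root.appE y))
  | d =>
    intro y
    by_cases hy : y = e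
    · subst hy
      rw [show napp d e = e from by simp [napp]]
      exact Relation.ReflTransGen.single (Step.root Root.dE)
    · rw [show napp d y = app d y from by simp [napp, hy]]
      exact Relation.ReflTransGen.refl
  | add a b iha ihb =>
    intro y
    rw [show napp (add a b) y = napp b (napp a y) from by simp [napp]]
    exact Relation.ReflTransGen.trans
      (Relation.ReflTransGen.single (Step.root (Root.appAdd a b y)))
      (Relation.ReflTransGen.trans (steps_appR (iha y)) (ihb (napp a y)))
  | app a b _ ihb =>
    intro y
    by_cases ha : a = d
    · subst ha
      rw [show napp (app d b) y = napp b (nadd y b) from by simp [napp]]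
      exact Relation.ReflTransGen.trans
        (Relation.ReflTransGen.single (Step.root (Root.appD b y)))
        (Relation.ReflTransGen.trans (steps_appR (steps_nadd y b)) (ihb (nadd y b)))
    · rw [show napp (app a b) y = app (app a b) y from by simp [napp, ha]]
      exact Relation.ReflTransGen.refl

lemma steps_nf (t : Tm) : Steps t (nf t) := by
  induction t with
  | d => exact Relation.ReflTransGen.refl
  | e => exact Relation.ReflTransGen.refl
  | add a b iha ihb =>
    exact Relation.ReflTransGen.trans
      (Relation.ReflTransGen.trans (steps_addL iha) (steps_addR ihb))
      (steps_nadd (nf a) (nf b))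
  | app a b iha ihb =>
    exact Relation.ReflTransGen.trans
      (Relation.ReflTransGen.trans (steps_appL iha) (steps_appR ihb))
      (steps_napp (nf a) (nf b))

/-! ### nf t is a normal form -/

lemma nf_d : NormalForm d := by
  intro u h
  cases h with
  | root r => cases r

lemma nf_e : NormalForm e := by
  intro u h
  cases h with
  | root r => cases r

lemma nf_add_intro {x y : Tm} (hx : NormalForm x) (hy : NormalForm y)
    (hxe : x ≠ e) (hxadd : ∀ a b, x ≠ add a b) (hye : y ≠ e) :
    NormalForm (add x y) := by
  intro u h
  cases h with
  | root r =>
    cases r with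
    | addE => exact hye rfl
    | eAdd => exact hxe rfl
    | assoc a b z => exact hxadd a b rfl
  | addL h => exact hx _ h
  | addR h => exact hy _ h

lemma nf_app_intro {x y : Tm} (hx : NormalForm x) (hy : NormalForm y)
    (hxe : x ≠ e) (hxadd : ∀ a b, x ≠ add a b) (hxd : ∀ a, x ≠ app d a)
    (hde : ¬(x = d ∧ y = e)) : NormalForm (app x y) := by
  intro u h
  cases h with
  | root r =>
    cases r with
    | appAdd a b z => exact hxadd a b rfl
    | appD a b => exact hxd _ rfl
    | appE => exact hxe rfl
    | dE => exact hde ⟨rfl, rfl⟩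
  | appL h => exact hx _ h
  | appR h => exact hy _ h

lemma nadd_nf (x : Tm) : ∀ y, NormalForm x → NormalForm y → NormalForm (nadd x y) := by
  induction x with
  | e => intro y _ hy; simpa [nadd] using hy
  | d =>
    intro y _ hy
    by_cases h : y = e
    · subst h; simpa [nadd] using nf_d
    · rw [show nadd d y = add d y from by simp [nadd, h]]
      exact nf_add_intro nf_d hy (by simp) (by intro a b hh; cases hh) h
  | app a b _ _ =>
    intro y hx hy
    by_cases h : y = e
    · subst h; simpa [nadd] using hx
    · rw [show nadd (app a b) y = add (app a b) y from by simp [nadd, h]]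
      exact nf_add_intro hx hy (by simp) (by intro c c' hh; cases hh) h
  | add a b iha ihb =>
    intro y hx hy
    have ha : NormalForm a := fun u h => hx _ (Step.addL h)
    have hb : NormalForm b := fun u h => hx _ (Step.addR h)
    by_cases h : y = e
    · subst h; simpa [nadd] using hx
    · rw [show nadd (add a b) y = nadd a (nadd b y) from by simp [nadd, h]]
      exact iha _ ha (ihb _ hb hy)

lemma napp_nf (x : Tm) : ∀ y, NormalForm x → NormalForm y → NormalForm (napp x y) := by
  induction x with
  | e => intro y _ hy; simpa [napp] using hy
  | d =>
    intro y _ hy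
    by_cases h : y = e
    · subst h; simpa [napp] using nf_e
    · rw [show napp d y = app d y from by simp [napp, h]]
      exact nf_app_intro nf_d hy (by simp) (by intro a b hh; cases hh)
        (by intro a hh; cases hh) (by rintro ⟨-, hh⟩; exact h hh)
  | add a b iha ihb =>
    intro y hx hy
    have ha : NormalForm a := fun u h => hx _ (Step.addL h)
    have hb : NormalForm b := fun u h => hx _ (Step.addR h)
    rw [show napp (add a b) y = napp b (napp a y) from by simp [napp]]
    exact ihb _ hb (iha _ ha hy)
  | app a b _ ihb =>
    intro y hx hy
    have hb : NormalForm b := fun u h => hx _ (Step.appR h)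
    by_cases ha : a = d
    · subst ha
      rw [show napp (app d b) y = napp b (nadd y b) from by simp [napp]]
      exact ihb _ hb (nadd_nf y b hy hb)
    · rw [show napp (app a b) y = app (app a b) y from by simp [napp, ha]]
      exact nf_app_intro hx hy (by simp) (by intro c c' hh; cases hh)
        (by intro c hh; injection hh with h1 h2; exact ha h1)
        (by rintro ⟨hh, -⟩; cases hh)

lemma nf_normal (t : Tm) : NormalForm (nf t) := by
  induction t with
  | d => exact nf_d
  | e => exact nf_e
  | add a b iha ihb => exact nadd_nf _ _ iha ihb
  | app a b iha ihb => exact napp_nf _ _ iha ihb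

/-! ### assembling -/

lemma nf_of_normal {t : Tm} (h : NormalForm t) : nf t = t := by
  rcases (steps_nf t).cases_head with h' | ⟨c, hc, -⟩
  · exact h'.symm
  · exact absurd hc (h c)

lemma eq_nf_of_steps {t n : Tm} (hs : Steps t n) (hn : NormalForm n) : n = nf t := by
  rw [nf_steps hs, nf_of_normal hn]

lemma termEq_of_steps {t u : Tm} (h : Steps t u) : TermEq t u := by
  induction h with
  | refl => exact Relation.EqvGen.refl t
  | tail _ h ih => exact ih.trans _ _ _ (Relation.EqvGen.rel _ _ h)

lemma nf_eq_of_termEq {t u : Tm} (h : TermEq t u) : nf t = nf u := by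
  induction h with
  | rel a b hab => exact nf_step hab
  | refl a => rfl
  | symm a b _ ih => exact ih.symm
  | trans a b c _ _ ih1 ih2 => exact ih1.trans ih2

/-- every ground term has a unique normal form, and two terms are
provably equal iff they have the same normal form. -/
theorem unique_normal_forms_and_word_problem :
    (∀ t : Tm, ∃! n : Tm, Steps t n ∧ NormalForm n) ∧
    (∀ t u nt nu : Tm, Steps t nt → NormalForm nt → Steps u nu → NormalForm nu →
      (TermEq t u ↔ nt = nu)) := by
  constructor
  · intro t
    refine ⟨nf t, ⟨steps_nf t, nf_normal t⟩, ?_⟩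
    rintro n ⟨hs, hn⟩
    exact eq_nf_of_steps hs hn
  · intro t u nt nu hst hnt hsu hnu
    have ht : nt = nf t := eq_nf_of_steps hst hnt
    have hu : nu = nf u := eq_nf_of_steps hsu hnu
    constructor
    · intro h; rw [ht, hu, nf_eq_of_termEq h]
    · intro h
      have h1 : TermEq t nt := termEq_of_steps hst
      have h2 : TermEq u nu := termEq_of_steps hsu
      rw [h] at h1
      exact h1.trans _ _ _ (h2.symm _ _)
end

section
/- For every normal form t ≠ e of the rewrite system R over {d, e, +, ·}, the constant e does not occur in t. -/
open Tm

/-- The (reflexive) subterm relation. -/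
inductive Subterm : Tm → Tm → Prop
  | refl (t) : Subterm t t
  | addL {s t u} : Subterm s t → Subterm s (add t u)
  | addR {s t u} : Subterm s u → Subterm s (add t u)
  | appL {s t u} : Subterm s t → Subterm s (app t u)
  | appR {s t u} : Subterm s u → Subterm s (app t u)

lemma nf_appL {a b : Tm} (h : NormalForm (app a b)) : NormalForm a :=
  fun u hs => h (app u b) (Step.appL hs)

lemma nf_appR {a b : Tm} (h : NormalForm (app a b)) : NormalForm b :=
  fun u hs => h (app a u) (Step.appR hs)

lemma nf_addL {a b : Tm} (h : NormalForm (add a b)) : NormalForm a :=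
  fun u hs => h (add u b) (Step.addL hs)

lemma nf_addR {a b : Tm} (h : NormalForm (add a b)) : NormalForm b :=
  fun u hs => h (add a u) (Step.addR hs)

lemma app_left_eq_d : ∀ a b : Tm, NormalForm (app a b) → a = d := by
  intro a
  induction a with
  | d => intro b _; rfl
  | e => intro b h; exact absurd (Step.root (Root.appE b)) (h b)
  | add x y ih1 ih2 =>
      intro b h
      exact absurd (Step.root (Root.appAdd x y b)) (h _)
  | app c x ih1 ih2 =>
      intro b h
      have hc : c = d := ih1 x (nf_appL h)
      subst hc
      exact absurd (Step.root (Root.appD x b)) (h _)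

/-- e does not occur in any normal form other than e itself. -/
theorem e_not_in_nf :
    ∀ t : Tm, NormalForm t → t ≠ e → ¬ Subterm e t := by
  intro t
  induction t with
  | d => intro _ _ hs; cases hs
  | e => intro _ hne _; exact hne rfl
  | add a b iha ihb =>
      intro h _ hs
      have ha : a ≠ e := fun he => by subst he; exact h b (Step.root (Root.eAdd b))
      have hb : b ≠ e := fun he => by subst he; exact h a (Step.root (Root.addE a))
      cases hs with
      | addL hs => exact iha (nf_addL h) ha hs
      | addR hs => exact ihb (nf_addR h) hb hs
  | app a b iha ihb =>
      intro h _ hs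
      have had : a = d := app_left_eq_d a b h
      subst had
      have hb : b ≠ e := fun he => by subst he; exact h e (Step.root Root.dE)
      cases hs with
      | appL hs => cases hs
      | appR hs => exact ihb (nf_appR h) hb hs
end
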